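/- Let X = Y ∪ Z be a Hausdorff space, where Y and Z are closed subspaces of X, each of which has a dense union of free intervals in its relative topology. Then the union of the free intervals of X is dense in X. -/

import Mathlib

open Set Topology

/-- A free interval in a space: an open subset homeomorphic to the open interval `(0,1)`. -/
def IsFreeInterval {X : Type*} [TopologicalSpace X] (J : Set X) : Prop :=
  IsOpen J ∧ Nonempty (J ≃ₜ Set.Ioo (0:ℝ) 1)

/-- Any nonempty open interval of `ℝ` is homeomorphic to `(0,1)`. -/
noncomputable def iooHomeo {a b : ℝ} (h : a < b) : (Set.Ioo a b) ≃ₜ (Set.Ioo (0:ℝ) 1) := by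
  have hba : (0:ℝ) < b - a := sub_pos.2 h
  have e := ((affineHomeomorph (b - a) a hba.ne').image (Set.Ioo (0:ℝ) 1)).symm
  rw [affineHomeomorph_image_Ioo _ _ _ _ hba] at e
  rw [show (b - a) * 0 + a = a by ring, show (b - a) * 1 + a = b by ring] at e
  exact e

/-- A space embedding onto an interval `Ioo a b` (`a < b`) is homeomorphic to `(0,1)`. -/
theorem nonempty_homeo_of_embedding {T : Type*} [TopologicalSpace T] {f : T → ℝ} {a b : ℝ}
    (hab : a < b) (hf : Topology.IsEmbedding f) (hr : Set.range f = Set.Ioo a b) :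
    Nonempty (T ≃ₜ Set.Ioo (0:ℝ) 1) :=
  ⟨((Topology.IsEmbedding.toHomeomorph hf).trans (Homeomorph.setCongr hr)).trans (iooHomeo hab)⟩

/-- Key lemma: a nonempty open set admitting an open embedding into `ℝ` contains a
nonempty free interval. -/
theorem exists_freeInterval_of_openEmbedding {X : Type*} [TopologicalSpace X] {W : Set X}
    (hWo : IsOpen W) (hne : W.Nonempty) (f : W → ℝ) (hf : Topology.IsEmbedding f)
    (hor : IsOpen (Set.range f)) :
    ∃ J : Set X, IsFreeInterval J ∧ J ⊆ W ∧ J.Nonempty := by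
  obtain ⟨x, hx⟩ := hne
  obtain ⟨a, b, hab, hsub⟩ := hor.exists_Ioo_subset ⟨f ⟨x, hx⟩, Set.mem_range_self _⟩
  refine ⟨Subtype.val '' (f ⁻¹' Set.Ioo a b), ⟨?_, ?_⟩, ?_, ?_⟩
  · exact hWo.isOpenMap_subtype_val _ (hf.continuous.isOpen_preimage _ isOpen_Ioo)
  · -- homeomorphic to (0,1)
    set J : Set X := Subtype.val '' (f ⁻¹' Set.Ioo a b) with hJ
    have hJW : J ⊆ W := by
      rintro _ ⟨w, _, rfl⟩; exact w.2
    set g : J → ℝ := fun j => f (Set.inclusion hJW j) with hg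
    have hge : Topology.IsEmbedding g :=
      hf.comp (Topology.IsEmbedding.inclusion hJW)
    have hrange : Set.range g = Set.Ioo a b := by
      have h1 : Set.range g = f '' (Set.range (Set.inclusion hJW)) := by
        rw [show g = f ∘ Set.inclusion hJW from rfl, Set.range_comp]
      rw [h1, Set.range_inclusion]
      have h2 : {w : W | (w : X) ∈ J} = f ⁻¹' Set.Ioo a b := by
        ext w
        simp only [Set.mem_setOf_eq, hJ, Set.mem_image, Set.mem_preimage]
        constructor
        · rintro ⟨u, hu, huw⟩
          rwa [show u = w from Subtype.val_injective huw] at hu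
        · intro hw; exact ⟨w, hw, rfl⟩
      rw [h2, Set.image_preimage_eq_inter_range, Set.inter_eq_left]
      exact hsub
    exact nonempty_homeo_of_embedding hab hge hrange
  · rintro _ ⟨w, _, rfl⟩; exact w.2
  · obtain ⟨r, hr⟩ := Set.nonempty_Ioo.2 hab
    obtain ⟨w, hw⟩ := hsub hr
    exact ⟨w, w, by rw [Set.mem_preimage, hw]; exact hr, rfl⟩

/-- Main lemma: if the union of free intervals of a subspace `Y` is dense in `Y`, then any
nonempty open subset of `X` contained in `Y` contains a nonempty free interval of `X`. -/
theorem exists_freeInterval_subset {X : Type*} [TopologicalSpace X] {Y : Set X}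
    (hdY : Dense (⋃₀ {J : Set Y | IsFreeInterval J}))
    {V : Set X} (hVo : IsOpen V) (hVne : V.Nonempty) (hVY : V ⊆ Y) :
    ∃ J : Set X, IsFreeInterval J ∧ J ⊆ V ∧ J.Nonempty := by
  classical
  -- V pulled back to Y
  set V' : Set Y := Subtype.val ⁻¹' V with hV'
  have hV'o : IsOpen V' := hVo.preimage continuous_subtype_val
  have hV'ne : V'.Nonempty := by
    obtain ⟨x, hx⟩ := hVne
    exact ⟨⟨x, hVY hx⟩, hx⟩
  obtain ⟨y, hyV', hy⟩ := hdY.inter_open_nonempty V' hV'o hV'ne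
  obtain ⟨JY, hJYfree, hyJY⟩ := hy
  obtain ⟨hJYo, ⟨h⟩⟩ := hJYfree
  -- the set A = JY ∩ V' and its image W in X
  set A : Set Y := JY ∩ V' with hA
  have hAo : IsOpen A := hJYo.inter hV'o
  have hAne : A.Nonempty := ⟨y, hyJY, hyV'⟩
  set W : Set X := Subtype.val '' A with hW
  have hWV : W ⊆ V := by rintro _ ⟨a, ha, rfl⟩; exact ha.2
  have hWne : W.Nonempty := hAne.image _
  have hWo : IsOpen W := by
    obtain ⟨G, hGo, hGA⟩ := isOpen_induced_iff.1 hAo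
    have him : W = Y ∩ G := by rw [hW, ← hGA, Subtype.image_preimage_coe]
    have hsub1 : Y ∩ G ⊆ V := by
      rintro x ⟨hxY, hxG⟩
      have hxa : (⟨x, hxY⟩ : Y) ∈ A := by rw [← hGA]; exact hxG
      exact hxa.2
    have : W = V ∩ G := by
      rw [him]
      ext x
      constructor
      · rintro ⟨hxY, hxG⟩; exact ⟨hsub1 ⟨hxY, hxG⟩, hxG⟩
      · rintro ⟨hxV, hxG⟩; exact ⟨hVY hxV, hxG⟩
    rw [this]; exact hVo.inter hGo
  -- homeomorphism from A to W
  have gemb : Topology.IsEmbedding (fun a : A => (a.1 : X)) := by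
    exact Topology.IsEmbedding.subtypeVal.comp Topology.IsEmbedding.subtypeVal
  have grange : Set.range (fun a : A => (a.1 : X)) = W := by
    rw [show (fun a : A => (a.1 : X)) = (Subtype.val : Y → X) ∘ (Subtype.val : A → Y) from rfl,
      Set.range_comp, Subtype.range_coe]
  let e1 : A ≃ₜ W := (Topology.IsEmbedding.toHomeomorph gemb).trans (Homeomorph.setCongr grange)
  -- embedding k : A → ℝ
  have hAJ : A ⊆ JY := Set.inter_subset_left
  let k : A → ℝ := fun a => (h (Set.inclusion hAJ a) : ℝ)
  have hk : k = (Subtype.val : Set.Ioo (0:ℝ) 1 → ℝ) ∘ (↑h ∘ Set.inclusion hAJ) := rfl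
  have hkemb : Topology.IsEmbedding k := by
    rw [hk]
    exact Topology.IsEmbedding.subtypeVal.comp
      (h.isEmbedding.comp (Topology.IsEmbedding.inclusion hAJ))
  have hkrange : IsOpen (Set.range k) := by
    rw [hk, Set.range_comp, Set.range_comp, Set.range_inclusion]
    have hA0 : IsOpen {x : JY | (x : Y) ∈ A} := hAo.preimage continuous_subtype_val
    exact isOpen_Ioo.isOpenMap_subtype_val _ (h.isOpenMap _ hA0)
  -- the open embedding f : W → ℝ
  let f : W → ℝ := k ∘ e1.symm
  have hfe : Topology.IsEmbedding f := hkemb.comp e1.symm.isEmbedding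
  have hfr : IsOpen (Set.range f) := by
    have : Set.range f = Set.range k := by
      rw [show f = k ∘ e1.symm from rfl, Set.range_comp, Set.range_eq_univ.2 e1.symm.surjective,
        Set.image_univ]
    rw [this]; exact hkrange
  obtain ⟨J, hJ, hJW, hJne⟩ := exists_freeInterval_of_openEmbedding hWo hWne f hfe hfr
  exact ⟨J, hJ, hJW.trans hWV, hJne⟩

theorem dense_free_intervals_of_union {X : Type*} [TopologicalSpace X] [T2Space X]
    (Y Z : Set X) (hY : IsClosed Y) (hZ : IsClosed Z) (hYZ : Y ∪ Z = Set.univ)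
    (hdY : Dense (⋃₀ {J : Set Y | IsFreeInterval J}))
    (hdZ : Dense (⋃₀ {J : Set Z | IsFreeInterval J})) :
    Dense (⋃₀ {J : Set X | IsFreeInterval J}) := by
  rw [dense_iff_inter_open]
  intro U hU hUne
  by_cases hc : (U \ Z).Nonempty
  · have hVo : IsOpen (U \ Z) := hU.sdiff hZ
    have hVY : U \ Z ⊆ Y := fun x hx => by
      have := Set.mem_univ x
      rw [← hYZ] at this
      exact this.resolve_right hx.2
    obtain ⟨J, hJ, hJV, x, hxJ⟩ := exists_freeInterval_subset hdY hVo hc hVY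
    exact ⟨x, (hJV hxJ).1, J, hJ, hxJ⟩
  · have hUZ : U ⊆ Z := by
      intro x hx
      by_contra hxZ
      exact hc ⟨x, hx, hxZ⟩
    obtain ⟨J, hJ, hJV, x, hxJ⟩ := exists_freeInterval_subset hdZ hU hUne hUZ
    exact ⟨x, hJV hxJ, J, hJ, hxJ⟩
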